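/- Let P22(n) be the set of partitions λ of n with smallest part at least 2 and with λ_1 = λ_2, and let N22(n) = Σ_{λ∈P22(n)} n(λ) where n(λ) = Σ_i (i−1)λ_i. Then 8·N22(n) ≤ n(n+1)·|P22(n)|. -/

import Mathlib

/-- The descending list of parts of a partition. -/
def Nat.Partition.descParts {n : ℕ} (P : n.Partition) : List ℕ :=
  (P.parts.sort (· ≤ ·)).reverse

/-- `n(λ) = Σ_{i≥1} (i-1)λ_i` for a partition `λ` listed in decreasing order. -/
def Nat.Partition.nval {n : ℕ} (P : n.Partition) : ℕ :=
  (List.zipWith (· * ·) (List.range P.descParts.length) P.descParts).sum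

/-- `N(n) = Σ_{λ ⊢ n} n(λ)`. -/
def Nfun (n : ℕ) : ℕ := ∑ P : Nat.Partition n, P.nval

/-- `p(n)`, the number of partitions of `n`. -/
def pfun (n : ℕ) : ℕ := Fintype.card (Nat.Partition n)

namespace N22aux

open Multiset

/-- number of parts `≥ k` -/
def D (k : ℕ) (s : Multiset ℕ) : ℕ := Multiset.card (s.filter (fun p => k ≤ p))

/-- conjugate multiset -/
def conjM (s : Multiset ℕ) : Multiset ℕ := (Multiset.range s.sup).map (fun k => D (k+1) s)

lemma D_anti {j k : ℕ} (h : j ≤ k) (s : Multiset ℕ) : D k s ≤ D j s :=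
  Multiset.card_le_card (Multiset.monotone_filter_right s (fun b hb => le_trans h hb))

lemma D_pos_iff {k : ℕ} {s : Multiset ℕ} : 0 < D k s ↔ ∃ p ∈ s, k ≤ p := by
  rw [D, Multiset.card_pos_iff_exists_mem]
  constructor
  · rintro ⟨a, ha⟩; rw [Multiset.mem_filter] at ha; exact ⟨a, ha.1, ha.2⟩
  · rintro ⟨p, hp, hkp⟩; exact ⟨p, Multiset.mem_filter.2 ⟨hp, hkp⟩⟩

lemma D_cons (k p : ℕ) (t : Multiset ℕ) :
    D (k+1) (p ::ₘ t) = (if k < p then 1 else 0) + D (k+1) t := by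
  rw [D, D, Multiset.filter_cons, Multiset.card_add]
  by_cases h : k < p
  · rw [if_pos h, if_pos (by omega)]; simp
  · rw [if_neg h, if_neg (by omega)]; simp

lemma sum_ite_lt {m p : ℕ} (h : p ≤ m) :
    ∑ k ∈ Finset.range m, (if k < p then 1 else 0) = p := by
  have e : (Finset.range m).filter (fun k => k < p) = Finset.range p := by
    ext k
    simp only [Finset.mem_filter, Finset.mem_range]
    omega
  rw [Finset.sum_boole, e, Finset.card_range]
  rfl

lemma sum_ite_lt_id {m p : ℕ} (h : p ≤ m) :
    2 * ∑ k ∈ Finset.range m, (if k < p then k else 0) = p * (p - 1) := by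
  have h1 : ∑ k ∈ Finset.range m, (if k < p then k else 0) = ∑ k ∈ Finset.range p, k := by
    rw [← Finset.sum_subset (Finset.range_subset_range.2 h)]
    · apply Finset.sum_congr rfl
      intro k hk
      rw [if_pos (Finset.mem_range.1 hk)]
    · intro x _ hx
      rw [if_neg (fun hc => hx (Finset.mem_range.2 hc))]
  rw [h1, mul_comm]
  exact Finset.sum_range_id_mul_two p

lemma sum_D (s : Multiset ℕ) : ∀ m, (∀ p ∈ s, p ≤ m) →
    ∑ k ∈ Finset.range m, D (k+1) s = s.sum := by
  induction s using Multiset.induction with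
  | empty => intro m _; simp [D]
  | cons p t ih =>
    intro m h
    have hpm : p ≤ m := h p (Multiset.mem_cons_self p t)
    have htm : ∀ q ∈ t, q ≤ m := fun q hq => h q (Multiset.mem_cons_of_mem hq)
    calc ∑ k ∈ Finset.range m, D (k+1) (p ::ₘ t)
        = ∑ k ∈ Finset.range m, ((if k < p then 1 else 0) + D (k+1) t) :=
          Finset.sum_congr rfl (fun k _ => D_cons k p t)
      _ = (∑ k ∈ Finset.range m, (if k < p then 1 else 0))
            + ∑ k ∈ Finset.range m, D (k+1) t := Finset.sum_add_distrib
      _ = p + t.sum := by rw [sum_ite_lt hpm, ih m htm]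
      _ = (p ::ₘ t).sum := by rw [Multiset.sum_cons]

lemma sum_kD (s : Multiset ℕ) : ∀ m, (∀ p ∈ s, p ≤ m) →
    2 * ∑ k ∈ Finset.range m, k * D (k+1) s = (s.map (fun p => p * (p-1))).sum := by
  induction s using Multiset.induction with
  | empty => intro m _; simp [D]
  | cons p t ih =>
    intro m h
    have hpm : p ≤ m := h p (Multiset.mem_cons_self p t)
    have htm : ∀ q ∈ t, q ≤ m := fun q hq => h q (Multiset.mem_cons_of_mem hq)
    have e1 : ∑ k ∈ Finset.range m, k * D (k+1) (p ::ₘ t)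
        = (∑ k ∈ Finset.range m, (if k < p then k else 0))
            + ∑ k ∈ Finset.range m, k * D (k+1) t := by
      rw [← Finset.sum_add_distrib]
      apply Finset.sum_congr rfl
      intro k _
      rw [D_cons, Nat.mul_add]
      congr 1
      by_cases hk : k < p <;> simp [hk]
    have e2 := sum_ite_lt_id (m := m) (p := p) hpm
    have e3 := ih m htm
    rw [Multiset.map_cons, Multiset.sum_cons, e1, Nat.mul_add, e2, e3]

lemma D_conj_eq (s : Multiset ℕ) (j : ℕ) :
    D j (conjM s) = ((Finset.range s.sup).filter (fun i => j ≤ D (i+1) s)).card := by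
  rw [D, conjM, Multiset.filter_map, Multiset.card_map, Finset.card, Finset.filter_val,
    Finset.range_val]
  simp [Function.comp_def]

lemma galois {s : Multiset ℕ} {j k : ℕ} (hj : 1 ≤ j) (hk : 1 ≤ k) :
    j ≤ D k s ↔ k ≤ D j (conjM s) := by
  rw [D_conj_eq]
  constructor
  · intro h
    have hkm : k ≤ s.sup := by
      obtain ⟨p, hp, hkp⟩ := D_pos_iff.mp (lt_of_lt_of_le hj h)
      exact le_trans hkp (Multiset.le_sup hp)
    have hsub : Finset.range k ⊆ (Finset.range s.sup).filter (fun i => j ≤ D (i+1) s) := by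
      intro i hi
      rw [Finset.mem_range] at hi
      rw [Finset.mem_filter, Finset.mem_range]
      exact ⟨lt_of_lt_of_le hi hkm, le_trans h (D_anti (by omega) s)⟩
    calc k = (Finset.range k).card := (Finset.card_range k).symm
      _ ≤ _ := Finset.card_le_card hsub
  · intro h
    by_contra hc
    push_neg at hc
    have hsub : (Finset.range s.sup).filter (fun i => j ≤ D (i+1) s)
        ⊆ Finset.range (k-1) := by
      intro i hi
      rw [Finset.mem_filter] at hi
      rw [Finset.mem_range]
      by_contra hik
      push_neg at hik
      have : D (i+1) s ≤ D k s := D_anti (by omega) s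
      omega
    have := Finset.card_le_card hsub
    rw [Finset.card_range] at this
    omega

lemma count_add_D (a : ℕ) (u : Multiset ℕ) :
    Multiset.count a u + D (a+1) u = D a u := by
  induction u using Multiset.induction with
  | empty => simp [D]
  | cons p w ih =>
    rw [Multiset.count_cons, D, D, Multiset.filter_cons, Multiset.filter_cons,
      Multiset.card_add, Multiset.card_add]
    show (Multiset.count a w + if a = p then 1 else 0)
        + (Multiset.card (if a + 1 ≤ p then ({p} : Multiset ℕ) else 0) + D (a+1) w)
        = Multiset.card (if a ≤ p then ({p} : Multiset ℕ) else 0) + D a w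
    by_cases h1 : a = p
    · rw [if_pos h1, if_neg (by omega), if_pos (by omega)]
      simp only [Multiset.card_singleton, Multiset.card_zero]
      omega
    · by_cases h2 : a + 1 ≤ p
      · rw [if_neg h1, if_pos h2, if_pos (by omega)]
        simp only [Multiset.card_singleton, Multiset.card_zero]
        omega
      · rw [if_neg h1, if_neg h2, if_neg (by omega)]
        simp only [Multiset.card_singleton, Multiset.card_zero]
        omega

lemma D_inj {s t : Multiset ℕ} (hs : ∀ p ∈ s, 0 < p) (ht : ∀ p ∈ t, 0 < p)
    (h : ∀ k, 1 ≤ k → D k s = D k t) : s = t := by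
  have hD : ∀ a, Multiset.count a s + D (a+1) s = D a s := fun a => count_add_D a s
  have hDt : ∀ a, Multiset.count a t + D (a+1) t = D a t := fun a => count_add_D a t
  ext a
  rcases Nat.eq_zero_or_pos a with rfl | ha
  · rw [Multiset.count_eq_zero_of_notMem (fun hm => absurd (hs 0 hm) (lt_irrefl 0)),
      Multiset.count_eq_zero_of_notMem (fun hm => absurd (ht 0 hm) (lt_irrefl 0))]
  · have h1 := hD a
    have h2 := hDt a
    have h3 := h a ha
    have h4 := h (a+1) (by omega)
    omega

lemma conjM_inj {s t : Multiset ℕ} (hs : ∀ p ∈ s, 0 < p) (ht : ∀ p ∈ t, 0 < p)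
    (h : conjM s = conjM t) : s = t := by
  apply D_inj hs ht
  intro k hk
  apply le_antisymm
  · rcases Nat.eq_zero_or_pos (D k s) with h0 | h0
    · omega
    · have := (galois (s := s) h0 hk).mp (le_refl _)
      rw [h] at this
      exact (galois (s := t) h0 hk).mpr this
  · rcases Nat.eq_zero_or_pos (D k t) with h0 | h0
    · omega
    · have := (galois (s := t) h0 hk).mp (le_refl _)
      rw [← h] at this
      exact (galois (s := s) h0 hk).mpr this

/-- conjugate of a partition -/
def conj {n : ℕ} (P : n.Partition) : n.Partition where
  parts := conjM P.parts
  parts_pos := by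
    intro i hi
    rw [conjM, Multiset.mem_map] at hi
    obtain ⟨k, hk, rfl⟩ := hi
    rw [Multiset.mem_range] at hk
    rw [D_pos_iff]
    by_contra hc
    push_neg at hc
    have : P.parts.sup ≤ k := Multiset.sup_le.2 (fun b hb => by have := hc b hb; omega)
    omega
  parts_sum := by
    rw [conjM, show ((Multiset.range P.parts.sup).map (fun k => D (k+1) P.parts)).sum
        = ∑ k ∈ Finset.range P.parts.sup, D (k+1) P.parts from rfl,
      sum_D _ _ (fun p hp => Multiset.le_sup hp), P.parts_sum]

lemma conj_parts {n : ℕ} (P : n.Partition) : (conj P).parts = conjM P.parts := rfl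

lemma descParts_coe {n : ℕ} (P : n.Partition) : (↑P.descParts : Multiset ℕ) = P.parts := by
  rw [Nat.Partition.descParts, Multiset.coe_reverse, Multiset.sort_eq]

lemma descParts_sorted {n : ℕ} (P : n.Partition) :
    P.descParts.Pairwise (fun a b => b ≤ a) := by
  rw [Nat.Partition.descParts, List.pairwise_reverse]
  exact Multiset.pairwise_sort _ _

lemma descParts_eq {n : ℕ} (P : n.Partition) (l : List ℕ)
    (hs : l.Pairwise (fun a b => b ≤ a)) (hl : (↑l : Multiset ℕ) = P.parts) :
    P.descParts = l := by
  rw [Nat.Partition.descParts]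
  have h1 : Multiset.sort P.parts (· ≤ ·) = l.reverse := by
    refine (fun hp h1 h2 => List.Perm.eq_of_pairwise' (r := (· ≤ ·)) h1 h2 hp) ?_ ?_ ?_
    · rw [← Multiset.coe_eq_coe, Multiset.sort_eq, ← hl, Multiset.coe_reverse]
    · exact Multiset.pairwise_sort _ _
    · rw [List.pairwise_reverse]; exact hs
  rw [h1, List.reverse_reverse]

lemma descParts_conj {n : ℕ} (P : n.Partition) :
    (conj P).descParts = (List.range P.parts.sup).map (fun k => D (k+1) P.parts) := by
  apply descParts_eq (conj P)
  · apply List.Pairwise.map (R := (· < ·))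
    · intro a b hab
      exact D_anti (by omega) P.parts
    · exact List.pairwise_lt_range
  · show _ = conjM P.parts
    rw [conjM, ← Multiset.coe_range, Multiset.map_coe]

lemma nval_conj {n : ℕ} (P : n.Partition) :
    2 * (conj P).nval = (P.parts.map (fun p => p * (p-1))).sum := by
  rw [Nat.Partition.nval, descParts_conj, List.length_map, List.length_range]
  rw [List.zipWith_map_right, List.zipWith_self]
  have : ((List.range P.parts.sup).map (fun k => k * D (k+1) P.parts)).sum
      = ∑ k ∈ Finset.range P.parts.sup, k * D (k+1) P.parts := by
    simp [Finset.sum, Finset.range, ← Multiset.coe_range, Multiset.map_coe]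
  rw [this, sum_kD _ _ (fun p hp => Multiset.le_sup hp)]

/-- recursive version of `nval` -/
def Wr : List ℕ → ℕ
  | [] => 0
  | _ :: t => Wr t + t.sum

def Lf : List ℕ → ℕ → ℕ
  | [], _ => 0
  | x :: t, k => x * (4*k + x) + Lf t (k+1)

def Rf : List ℕ → ℕ → ℕ
  | [], _ => 0
  | x :: t, c => x * (2*c + 3) + Rf t (c + x)

/-- sum of squares -/
def Q (l : List ℕ) : ℕ := (l.map (fun x => x * x)).sum

lemma zip_shift (l : List ℕ) : ∀ k : ℕ,
    (List.zipWith (fun a b => (a + k) * b) (List.range l.length) l).sum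
      = Wr l + k * l.sum := by
  induction l with
  | nil => intro k; simp [Wr]
  | cons x t ih =>
    intro k
    rw [List.length_cons, List.range_succ_eq_map]
    rw [List.zipWith_cons_cons, List.zipWith_map_left]
    have : (List.zipWith (fun a b => (Nat.succ a + k) * b) (List.range t.length) t)
        = (List.zipWith (fun a b => (a + (k+1)) * b) (List.range t.length) t) := by
      congr 1
      funext a b
      simp only [Nat.succ_eq_add_one]
      ring
    rw [List.sum_cons, this, ih (k+1), Wr, List.sum_cons]
    ring

lemma nval_eq_Wr {n : ℕ} (P : n.Partition) : P.nval = Wr P.descParts := by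
  rw [Nat.Partition.nval]
  have h := zip_shift P.descParts 0
  simp only [Nat.add_zero, Nat.mul_zero, Nat.zero_mul, Nat.add_zero] at h
  rw [← h]

lemma Rf_eq (l : List ℕ) : ∀ c, Rf l c + Q l = 2*c*l.sum + l.sum*l.sum + 3*l.sum := by
  induction l with
  | nil => intro c; simp [Rf, Q]
  | cons x t ih =>
    intro c
    have iht := ih (c + x)
    rw [Rf, Q, List.map_cons, List.sum_cons, List.sum_cons]
    rw [Q] at iht
    zify at iht ⊢
    linear_combination iht

lemma Lf_eq (l : List ℕ) : ∀ k, Lf l k = 4*k*l.sum + 4*Wr l + Q l := by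
  induction l with
  | nil => intro k; simp [Lf, Wr, Q]
  | cons x t ih =>
    intro k
    have iht := ih (k+1)
    simp only [Lf, Q, List.map_cons, List.sum_cons, Wr] at *
    zify at iht ⊢
    linear_combination iht

lemma Lf_le_Rf (l : List ℕ) : ∀ k c, (∀ x ∈ l, 2 ≤ x ∧ 4*k + x ≤ 2*c + 3) →
    Lf l k ≤ Rf l c := by
  induction l with
  | nil => intro k c _; simp [Lf, Rf]
  | cons x t ih =>
    intro k c h
    have hx := h x List.mem_cons_self
    rw [Lf, Rf]
    have h1 : x * (4*k + x) ≤ x * (2*c + 3) := Nat.mul_le_mul_left x (by omega)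
    have h2 : Lf t (k+1) ≤ Rf t (c+x) := by
      apply ih
      intro y hy
      have := h y (List.mem_cons_of_mem x hy)
      constructor
      · exact this.1
      · omega
    omega

/-- the pointwise inequality, list form -/
lemma pointwise_list (a : ℕ) (t : List ℕ) (ha : 2 ≤ a)
    (ht : ∀ x ∈ t, 2 ≤ x ∧ x ≤ a) :
    4 * Wr (a :: a :: t) + 2 * Q (a :: a :: t)
      ≤ (a :: a :: t).sum * (a :: a :: t).sum + 3 * (a :: a :: t).sum := by
  set l := a :: a :: t with hl
  have key : Lf l 0 ≤ Rf l 0 := by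
    simp only [hl, Lf, Rf]
    norm_num
    have h1 : a * a + a * (4 + a) ≤ a * 3 + a * (2 * a + 3) := by nlinarith
    have h2 : Lf t 2 ≤ Rf t (a + a) := by
      apply Lf_le_Rf
      intro x hx
      have := ht x hx
      exact ⟨this.1, by omega⟩
    omega
  have e1 := Lf_eq l 0
  have e2 := Rf_eq l 0
  simp only [Nat.mul_zero, Nat.zero_mul, Nat.zero_add, Nat.add_zero] at e1 e2
  omega

lemma mem_descParts {n : ℕ} (P : n.Partition) {x : ℕ} :
    x ∈ P.descParts ↔ x ∈ P.parts := by
  rw [← descParts_coe P, Multiset.mem_coe]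

lemma descParts_sum {n : ℕ} (P : n.Partition) : P.descParts.sum = n := by
  rw [← Multiset.sum_coe, descParts_coe, P.parts_sum]

lemma qsplit : ∀ l : List ℕ, (l.map (fun p => p * (p-1))).sum + l.sum = Q l := by
  intro l
  induction l with
  | nil => simp [Q]
  | cons x t ih =>
    rw [List.map_cons, List.sum_cons, List.sum_cons, Q, List.map_cons, List.sum_cons, ← Q, ← ih]
    have : x * (x - 1) + x = x * x := by
      rcases x with _ | y
      · rfl
      · simp only [Nat.add_sub_cancel]
        ring
    omega

lemma struct {n : ℕ} (P : n.Partition) (hc : 2 ≤ P.parts.count P.parts.sup) :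
    ∃ t : List ℕ, P.descParts = P.parts.sup :: P.parts.sup :: t
      ∧ ∀ x ∈ t, x ≤ P.parts.sup := by
  set a := P.parts.sup with hadef
  have hcl : 2 ≤ P.descParts.count a := by
    rw [← descParts_coe P, Multiset.coe_count] at hc
    exact hc
  have hle : ∀ x ∈ P.descParts, x ≤ a := fun x hx =>
    Multiset.le_sup ((mem_descParts P).1 hx)
  have hsort := descParts_sorted P
  obtain ⟨x, l', hx⟩ : ∃ x l', P.descParts = x :: l' := by
    cases h : P.descParts with
    | nil => rw [h] at hcl; simp at hcl
    | cons x l' => exact ⟨x, l', rfl⟩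
  rw [hx] at hcl hle hsort
  have hxa : x = a := by
    have h1 : x ≤ a := hle x List.mem_cons_self
    have ha_mem : a ∈ x :: l' := List.count_pos_iff.1 (by omega)
    rcases List.mem_cons.1 ha_mem with h | h
    · omega
    · have := (List.pairwise_cons.1 hsort).1 a h
      omega
  subst hxa
  have hcl' : 1 ≤ l'.count a := by
    rw [List.count_cons_self] at hcl
    omega
  obtain ⟨y, t, hy⟩ : ∃ y t, l' = y :: t := by
    cases h : l' with
    | nil => rw [h] at hcl'; simp at hcl'
    | cons y t => exact ⟨y, t, rfl⟩
  rw [hy] at hcl hle hsort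
  have hsort' := (List.pairwise_cons.1 hsort).2
  have hya : y = a := by
    have h1 : y ≤ a := hle y (List.mem_cons_of_mem _ List.mem_cons_self)
    have hx_mem : a ∈ y :: t := List.count_pos_iff.1 (by
      rw [List.count_cons_self] at hcl; omega)
    rcases List.mem_cons.1 hx_mem with h | h
    · omega
    · have := (List.pairwise_cons.1 hsort').1 a h
      omega
  subst hya
  exact ⟨t, by rw [hx, hy], fun z hz =>
    hle z (List.mem_cons_of_mem _ (List.mem_cons_of_mem _ hz))⟩

lemma count_eq_sup_le_D {m : ℕ} {s : Multiset ℕ} (hm : m = s.sup) :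
    Multiset.count m s ≤ D m s := by
  rw [Multiset.count_eq_card_filter_eq, D]
  exact Multiset.card_le_card
    (Multiset.monotone_filter_right s (fun b hb => le_of_eq hb))

lemma card_filter_range (q : ℕ → Prop) [DecidablePred q] (m : ℕ) :
    Multiset.card (Multiset.filter q (Multiset.range m)) = ((Finset.range m).filter q).card := by
  rw [Finset.card, Finset.filter_val, Finset.range_val]

lemma conj_mem {n : ℕ} (P : n.Partition)
    (h2 : ∀ p ∈ P.parts, 2 ≤ p) (hc : 2 ≤ P.parts.count P.parts.sup) :
    (∀ p ∈ (conj P).parts, 2 ≤ p) ∧ 2 ≤ (conj P).parts.count (conj P).parts.sup := by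
  have hsup_mem : P.parts.sup ∈ P.parts := Multiset.count_pos.1 (by omega)
  have hm2 : 2 ≤ P.parts.sup := h2 _ hsup_mem
  have hDm : 2 ≤ D P.parts.sup P.parts := le_trans hc (count_eq_sup_le_D rfl)
  have hall : ∀ p ∈ (conj P).parts, 2 ≤ p := by
    intro p hp
    rw [conj_parts, conjM, Multiset.mem_map] at hp
    obtain ⟨k, hk, rfl⟩ := hp
    rw [Multiset.mem_range] at hk
    exact le_trans hDm (D_anti (by omega) P.parts)
  refine ⟨hall, ?_⟩
  have hfull : ∀ k, k ≤ 2 → D k P.parts = Multiset.card P.parts := by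
    intro k hk
    rw [D]
    congr 1
    apply Multiset.filter_eq_self.2
    intro p hp
    exact le_trans hk (h2 p hp)
  have hsup_conj : (conj P).parts.sup = D 1 P.parts := by
    apply le_antisymm
    · apply Multiset.sup_le.2
      intro b hb
      rw [conj_parts, conjM, Multiset.mem_map] at hb
      obtain ⟨k, _, rfl⟩ := hb
      exact D_anti (by omega) P.parts
    · apply Multiset.le_sup
      rw [conj_parts, conjM, Multiset.mem_map]
      exact ⟨0, Multiset.mem_range.2 (by omega), rfl⟩
  rw [hsup_conj, conj_parts, conjM, Multiset.count_eq_card_filter_eq,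
    Multiset.filter_map, Multiset.card_map, card_filter_range]
  have hsub : ({0, 1} : Finset ℕ) ⊆ (Finset.range P.parts.sup).filter
      ((fun x => D 1 P.parts = x) ∘ fun k => D (k+1) P.parts) := by
    intro i hi
    rw [Finset.mem_insert, Finset.mem_singleton] at hi
    rw [Finset.mem_filter, Finset.mem_range]
    rcases hi with rfl | rfl
    · refine ⟨by omega, ?_⟩
      show D 1 P.parts = D (0+1) P.parts
      norm_num
    · refine ⟨by omega, ?_⟩
      show D 1 P.parts = D (1+1) P.parts
      rw [hfull 1 (by omega), hfull 2 (by omega)]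
  have hcard := Finset.card_le_card hsub
  have h01 : ({0, 1} : Finset ℕ).card = 2 := by decide
  omega

end N22aux

open N22aux in
/-- `8·N22(n) ≤ n(n+1)·p22(n)`, where the sum ranges over partitions of `n`
with smallest part `≥ 2` and the two largest parts equal. -/
theorem N22_le (n : ℕ) :
    8 * ∑ P ∈ Finset.univ.filter
        (fun P : Nat.Partition n => (∀ p ∈ P.parts, 2 ≤ p) ∧ 2 ≤ P.parts.count P.parts.sup),
        P.nval
      ≤ n * (n + 1) * (Finset.univ.filter
        (fun P : Nat.Partition n => (∀ p ∈ P.parts, 2 ≤ p) ∧ 2 ≤ P.parts.count P.parts.sup)).card := by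
  classical
  set S := Finset.univ.filter
      (fun P : Nat.Partition n => (∀ p ∈ P.parts, 2 ≤ p) ∧ 2 ≤ P.parts.count P.parts.sup)
    with hSdef
  have hmemS : ∀ P : Nat.Partition n, P ∈ S ↔
      (∀ p ∈ P.parts, 2 ≤ p) ∧ 2 ≤ P.parts.count P.parts.sup := by
    intro P
    rw [hSdef, Finset.mem_filter]
    simp
  have hmap : ∀ P ∈ S, conj P ∈ S := by
    intro P hP
    rw [hmemS] at hP ⊢
    exact conj_mem P hP.1 hP.2
  have hinj : ∀ P ∈ S, ∀ Q ∈ S, conj P = conj Q → P = Q := by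
    intro P _ Q _ h
    apply Nat.Partition.ext
    apply conjM_inj (fun p hp => P.parts_pos hp) (fun p hp => Q.parts_pos hp)
    rw [← conj_parts, ← conj_parts, h]
  have himg : S.image conj = S := by
    apply Finset.eq_of_subset_of_card_le
    · intro Q hQ
      rw [Finset.mem_image] at hQ
      obtain ⟨P, hP, rfl⟩ := hQ
      exact hmap P hP
    · rw [Finset.card_image_of_injOn hinj]
  have hre : ∑ P ∈ S, P.nval = ∑ P ∈ S, (conj P).nval := by
    conv_lhs => rw [← himg]
    rw [Finset.sum_image hinj]
  have hpoint : ∀ P ∈ S, 4 * P.nval + 4 * (conj P).nval ≤ n * (n + 1) := by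
    intro P hP
    rw [hmemS] at hP
    obtain ⟨h2, hc⟩ := hP
    obtain ⟨t, hlt, hta⟩ := struct P hc
    set a := P.parts.sup with ha
    have ha2 : 2 ≤ a := by
      apply h2
      exact Multiset.count_pos.1 (by omega)
    have hts : ∀ x ∈ t, 2 ≤ x ∧ x ≤ a := by
      intro x hx
      refine ⟨h2 x ?_, hta x hx⟩
      rw [← mem_descParts P, hlt]
      exact List.mem_cons_of_mem _ (List.mem_cons_of_mem _ hx)
    have key := pointwise_list a t ha2 hts
    rw [← hlt] at key
    have e1 : P.nval = Wr P.descParts := nval_eq_Wr P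
    have e2 : 2 * (conj P).nval + P.descParts.sum = Q P.descParts := by
      rw [nval_conj, ← descParts_coe P, Multiset.map_coe, Multiset.sum_coe, qsplit]
    have e3 : P.descParts.sum = n := descParts_sum P
    rw [e3] at key e2
    have e4 : n * (n + 1) = n * n + n := by ring
    omega
  calc 8 * ∑ P ∈ S, P.nval = 4 * ∑ P ∈ S, P.nval + 4 * ∑ P ∈ S, (conj P).nval := by
        rw [← hre]; ring
    _ = ∑ P ∈ S, (4 * P.nval + 4 * (conj P).nval) := by
        rw [Finset.sum_add_distrib, Finset.mul_sum, Finset.mul_sum]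
    _ ≤ ∑ _P ∈ S, n * (n + 1) := Finset.sum_le_sum hpoint
    _ = n * (n + 1) * S.card := by rw [Finset.sum_const, smul_eq_mul, mul_comm]
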